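/- Let Δ = σ + 4m be a fundamental discriminant and 𝒫(ℚ) the rational points of x² + σxy − my² = 1. Every rational point (B/A, C/A) with gcd(A,C) = 1 (in lowest common-denominator form) lies in 𝒫(ℚ̄)_prim: there exists an integer β ≡ B·C⁻¹ (mod A²) such that (x − βy)/A ∈ ℤ and A² | Q₀(β,1). -/

import Mathlib

/-- `Δ` is a fundamental discriminant of a quadratic field. -/
def IsFundamentalDiscriminant (Δ : ℤ) : Prop :=
  ∃ d : ℤ, Squarefree d ∧
    ((d % 4 = 1 ∧ Δ = d) ∨ ((d % 4 = 2 ∨ d % 4 = 3) ∧ Δ = 4 * d))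

/-- Every rational point `(B/A, C/A)` of the Pell conic, written in lowest
common-denominator form with `gcd(A,C) = 1`, is primitive: there is an integer
`β ≡ B·C⁻¹ (mod A²)` with `(x - βy)/A ∈ ℤ` and `A² ∣ Q₀(β,1)`. -/
theorem rational_points_primitive (σ m A B C : ℤ) (hσ : σ = 0 ∨ σ = 1)
    (hfund : IsFundamentalDiscriminant (σ + 4 * m)) (hA : 0 < A)
    (hcop : Int.gcd A C = 1)
    (hP : B ^ 2 + σ * B * C - m * C ^ 2 = A ^ 2) :
    ∃ β : ℤ, (A ^ 2 ∣ β * C - B) ∧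
      (∃ z : ℤ, ((B : ℚ) / A - (β : ℚ) * ((C : ℚ) / A)) / A = (z : ℚ)) ∧
      A ^ 2 ∣ β ^ 2 + σ * β - m := by
  have hco : IsCoprime A C := Int.isCoprime_iff_gcd_eq_one.mpr hcop
  have hco2 : IsCoprime (A ^ 2) C := hco.pow_left
  obtain ⟨u, v, huv⟩ := hco2
  refine ⟨B * v, ⟨-(B * u), by linear_combination B * huv⟩, ?_, ?_⟩
  · refine ⟨B * u, ?_⟩
    have hA0 : (A : ℚ) ≠ 0 := Int.cast_ne_zero.mpr hA.ne'
    have h : u * A ^ 2 + v * C = 1 := huv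
    have hQ : (u : ℚ) * A ^ 2 + v * C = 1 := by exact_mod_cast h
    have hz : (B : ℚ) - B * v * C = A ^ 2 * (B * u) := by
      have : B - B * v * C = A ^ 2 * (B * u) := by linear_combination -B * huv
      exact_mod_cast this
    field_simp
    push_cast; linear_combination hz
  · have hdvd : A ^ 2 ∣ C ^ 2 * ((B * v) ^ 2 + σ * (B * v) - m) := by
      refine ⟨1 - 2 * B ^ 2 * u + A ^ 2 * B ^ 2 * u ^ 2 - σ * B * u * C, ?_⟩
      linear_combination (B ^ 2 * v * C + B ^ 2 * (1 - u * A ^ 2) + σ * B * C) * huv + hP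
    exact (hco.pow_left.pow_right).dvd_of_dvd_mul_left hdvd
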